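/- Let f : [0,∞) → [0,∞) be of class C¹. Let V, u₀ ∈ C¹([−1,1]) be nonnegative even functions with V(0) > 0, u₀(0) > 0 and u₀(1) = 0. Let L ∈ [1/3,1) and assume V′ ≤ 0 and u₀′ ≤ 0 on [0,L], and 0 ≤ V(x) ≤ V(L) and 0 ≤ u₀(x) ≤ u₀(L) for all x ∈ [L,1]. Then for any τ > 0 and any nonnegative classical solution u on [0,τ]×[−1,1] of u_t = u_xx + V(x)f(u) on (0,τ]×(−1,1) with u(t,−1) = u(t,1) = 0 for t ∈ (0,τ] and u(0,·) = u₀, the following hold: (a) ∂_x u(t,x) ≤ 0 for all t ∈ (0,τ] and x ∈ [0,L]; (b) max_{x∈[−1,1]} u(t,x) = u(t,0) for all t ∈ (0,τ). -/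

import Mathlib

set_option maxHeartbeats 1000000

open Set Metric Filter Topology

section BASE


/-- From `C²` at a point, get an open set on which the function is `C²`. -/
lemma c2_local {φ : ℝ → ℝ} {x₀ : ℝ} (h : ContDiffAt ℝ 2 φ x₀) :
    ∃ s : Set ℝ, IsOpen s ∧ x₀ ∈ s ∧ ContDiffOn ℝ 2 φ s := by
  obtain ⟨u, hu, hcd⟩ := h.contDiffOn le_rfl (by simp)
  obtain ⟨s, hsu, hs, hxs⟩ := _root_.mem_nhds_iff.mp hu
  exact ⟨s, hs, hxs, hcd.mono hsu⟩

lemma derivDiffAt {φ : ℝ → ℝ} {x₀ : ℝ} (h : ContDiffAt ℝ 2 φ x₀) :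
    DifferentiableAt ℝ (deriv φ) x₀ := by
  obtain ⟨s, hs, hxs, hcd⟩ := c2_local h
  have hd1 : ContDiffOn ℝ 1 (deriv φ) s := hcd.deriv_of_isOpen hs (by norm_num)
  exact ((hd1.differentiableOn (by norm_num)).differentiableAt (hs.mem_nhds hxs))

lemma evDiffAt {φ : ℝ → ℝ} {x₀ : ℝ} (h : ContDiffAt ℝ 2 φ x₀) :
    ∀ᶠ y in 𝓝 x₀, DifferentiableAt ℝ φ y := by
  obtain ⟨s, hs, hxs, hcd⟩ := c2_local h
  filter_upwards [hs.mem_nhds hxs] with y hy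
  exact (hcd.differentiableOn (by norm_num)).differentiableAt (hs.mem_nhds hy)

/-- Second derivative test at an interior local max. -/
lemma secondDerivTest {φ : ℝ → ℝ} {x₀ : ℝ} (h2 : ContDiffAt ℝ 2 φ x₀)
    (hmax : IsLocalMax φ x₀) : deriv (deriv φ) x₀ ≤ 0 := by
  by_contra hcon
  push_neg at hcon
  have h0 : deriv φ x₀ = 0 := hmax.deriv_eq_zero
  have hda : HasDerivAt (deriv φ) (deriv (deriv φ) x₀) x₀ := (derivDiffAt h2).hasDerivAt
  rw [hasDerivAt_iff_tendsto_slope] at hda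
  have hev : ∀ᶠ y in 𝓝[≠] x₀, 0 < slope (deriv φ) x₀ y := hda.eventually (eventually_gt_nhds hcon)
  have hmono : 𝓝[>] x₀ ≤ 𝓝[≠] x₀ := nhdsWithin_mono _ (fun y hy => ne_of_gt hy)
  have hevr : ∀ᶠ y in 𝓝[>] x₀, 0 < deriv φ y := by
    filter_upwards [hev.filter_mono hmono, self_mem_nhdsWithin] with y hy hy'
    rw [slope_def_field, h0, sub_zero] at hy
    have hyx : (0:ℝ) < y - x₀ := by simp only [mem_Ioi] at hy'; linarith
    rcases div_pos_iff.mp hy with ⟨h1, _⟩ | ⟨_, h2⟩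
    · exact h1
    · linarith
  obtain ⟨b, hb, hbsub⟩ := mem_nhdsGT_iff_exists_Ioo_subset.mp hevr
  obtain ⟨s, hs, hxs, hcd⟩ := c2_local h2
  obtain ⟨r₁, hr₁, hball₁⟩ := Metric.mem_nhds_iff.mp (hs.mem_nhds hxs)
  obtain ⟨r₂, hr₂, hball₂⟩ := Metric.mem_nhds_iff.mp (hmax : ∀ᶠ y in 𝓝 x₀, φ y ≤ φ x₀)
  set x₁ : ℝ := x₀ + min (min r₁ r₂ / 2) ((b - x₀) / 2) with hx₁def
  have hbx : 0 < b - x₀ := by simp only [mem_Ioi] at hb; linarith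
  have hpos : 0 < min (min r₁ r₂ / 2) ((b - x₀) / 2) := by positivity
  have hx₁gt : x₀ < x₁ := by simp only [hx₁def]; linarith
  have hIccball : Icc x₀ x₁ ⊆ ball x₀ r₁ := by
    intro y hy
    obtain ⟨hy1, hy2⟩ := hy
    rw [hx₁def] at hy2
    rw [mem_ball, Real.dist_eq, abs_lt]
    have h1 : min (min r₁ r₂ / 2) ((b - x₀) / 2) ≤ min r₁ r₂ / 2 := min_le_left _ _
    have h2 : min r₁ r₂ ≤ r₁ := min_le_left _ _
    constructor <;> linarith
  have hIccball₂ : Icc x₀ x₁ ⊆ ball x₀ r₂ := by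
    intro y hy
    obtain ⟨hy1, hy2⟩ := hy
    rw [hx₁def] at hy2
    rw [mem_ball, Real.dist_eq, abs_lt]
    have h1 : min (min r₁ r₂ / 2) ((b - x₀) / 2) ≤ min r₁ r₂ / 2 := min_le_left _ _
    have h2 : min r₁ r₂ ≤ r₂ := min_le_right _ _
    constructor <;> linarith
  have hmonoI : StrictMonoOn φ (Icc x₀ x₁) := by
    apply strictMonoOn_of_deriv_pos (convex_Icc _ _)
    · exact (hcd.continuousOn).mono (fun y hy => hball₁ (hIccball hy))
    · intro y hy
      rw [interior_Icc] at hy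
      apply hbsub
      constructor
      · exact hy.1
      · have h1 : min (min r₁ r₂ / 2) ((b - x₀) / 2) ≤ (b - x₀) / 2 := min_le_right _ _
        have := hy.2
        simp only [hx₁def] at this
        linarith
  have hlt : φ x₀ < φ x₁ := hmonoI ⟨le_rfl, hx₁gt.le⟩ ⟨hx₁gt.le, le_rfl⟩ hx₁gt
  have : φ x₁ ≤ φ x₀ := hball₂ (hIccball₂ ⟨hx₁gt.le, le_rfl⟩)
  linarith


/-- At a max over `Icc 0 τ` attained at `t₀ ∈ Ioc 0 τ`, the derivative within `Ioc 0 τ`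
is nonnegative (left-side slopes are nonnegative). -/
lemma leftmax {τ t₀ c : ℝ} {ψ : ℝ → ℝ} (ht₀ : t₀ ∈ Ioc 0 τ)
    (hmax : ∀ s ∈ Icc 0 τ, ψ s ≤ ψ t₀)
    (hd : HasDerivWithinAt ψ c (Ioc 0 τ) t₀) : 0 ≤ c := by
  rw [hasDerivWithinAt_iff_tendsto_slope] at hd
  have hsub : Ioo 0 t₀ ⊆ Ioc 0 τ \ {t₀} :=
    fun s hs => ⟨⟨hs.1, hs.2.le.trans ht₀.2⟩, ne_of_lt hs.2⟩
  have hne : (𝓝[Ioo (0:ℝ) t₀] t₀).NeBot := by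
    rw [← mem_closure_iff_nhdsWithin_neBot, closure_Ioo (ne_of_lt ht₀.1)]
    exact ⟨ht₀.1.le, le_refl t₀⟩
  have hd' : Tendsto (slope ψ t₀) (𝓝[Ioo 0 t₀] t₀) (𝓝 c) :=
    hd.mono_left (nhdsWithin_mono _ hsub)
  refine ge_of_tendsto hd' ?_
  filter_upwards [self_mem_nhdsWithin] with s hs
  rw [slope_def_field]
  apply div_nonneg_of_nonpos
  · have hsI : s ∈ Icc 0 τ := ⟨hs.1.le, hs.2.le.trans ht₀.2⟩
    linarith [hmax s hsI]
  · linarith [hs.2]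

lemma dd_reflect (φ : ℝ → ℝ) (c x : ℝ) :
    deriv (deriv (fun y => φ (c - y))) x = deriv (deriv φ) (c - x) := by
  have h1 : deriv (fun y => φ (c - y)) = fun y => -deriv φ (c - y) :=
    funext fun y => deriv_comp_const_sub φ c y
  rw [h1]
  have h2 : deriv (fun y => -deriv φ (c - y)) x = -deriv (fun y => deriv φ (c - y)) x := by
    simp [deriv.neg]
  rw [h2, deriv_comp_const_sub, neg_neg]

lemma dd_sub {φ : ℝ → ℝ} (c : ℝ) {x : ℝ}
    (hev1 : ∀ᶠ y in 𝓝 x, DifferentiableAt ℝ φ y)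
    (hev2 : ∀ᶠ y in 𝓝 x, DifferentiableAt ℝ φ (c - y))
    (hd1 : DifferentiableAt ℝ (deriv φ) x)
    (hd2 : DifferentiableAt ℝ (deriv φ) (c - x)) :
    deriv (deriv (fun y => φ y - φ (c - y))) x = deriv (deriv φ) x - deriv (deriv φ) (c - x) := by
  have heq' : (deriv fun y => φ y - φ (c - y)) =ᶠ[𝓝 x]
      (fun y => deriv φ y + deriv φ (c - y)) := by
    filter_upwards [hev1, hev2] with y hy1 hy2
    have hy2' : DifferentiableAt ℝ (fun z => φ (c - z)) y := by
      have := hy2.comp y ((differentiableAt_const c).sub differentiableAt_id)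
      exact this
    rw [deriv_fun_sub hy1 hy2', deriv_comp_const_sub]
    ring
  rw [heq'.deriv_eq]
  have hd2' : DifferentiableAt ℝ (fun y => deriv φ (c - y)) x := by
    have := hd2.comp x ((differentiableAt_const c).sub differentiableAt_id)
    exact this
  rw [deriv_fun_add hd1 hd2', deriv_comp_const_sub]
  ring


/-- Weak parabolic maximum principle on a rectangle. -/
lemma maxprin (τ a b K : ℝ) (hτ : 0 < τ) (hab : a < b) (hK : 0 ≤ K) (g : ℝ → ℝ → ℝ)
    (hcont : ContinuousOn (fun q : ℝ × ℝ => g q.1 q.2) (Icc 0 τ ×ˢ Icc a b))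
    (hreg : ∀ t ∈ Ioc 0 τ, ∀ x ∈ Ioo a b, ContDiffAt ℝ 2 (g t) x)
    (hkey : ∀ t ∈ Ioc 0 τ, ∀ x ∈ Ioo a b, 0 < g t x →
      ∃ d, HasDerivWithinAt (fun s => g s x) d (Ioc 0 τ) t ∧
        d ≤ deriv (deriv (g t)) x + K * g t x)
    (hbdry : ∀ t ∈ Icc 0 τ, g t a ≤ 0 ∧ g t b ≤ 0)
    (hinit : ∀ x ∈ Icc a b, g 0 x ≤ 0) :
    ∀ t ∈ Icc 0 τ, ∀ x ∈ Icc a b, g t x ≤ 0 := by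
  have hQc : IsCompact (Icc (0:ℝ) τ ×ˢ Icc a b) := isCompact_Icc.prod isCompact_Icc
  have hQne : (Icc (0:ℝ) τ ×ˢ Icc a b).Nonempty :=
    ⟨(0, a), by constructor <;> constructor <;> simp [hτ.le, hab.le]⟩
  have hvcont : ContinuousOn (fun q : ℝ × ℝ => g q.1 q.2 * Real.exp (-(K+1) * q.1))
      (Icc (0:ℝ) τ ×ˢ Icc a b) := by
    apply hcont.mul
    exact (Real.continuous_exp.comp (continuous_const.mul continuous_fst)).continuousOn
  obtain ⟨q₀, hq₀Q, hq₀max'⟩ := hQc.exists_isMaxOn hQne hvcont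
  rw [isMaxOn_iff] at hq₀max'
  obtain ⟨t₀, x₀⟩ := q₀
  simp only [mem_prod] at hq₀Q
  obtain ⟨ht₀Q, hx₀Q⟩ := hq₀Q
  have hq₀max : ∀ t ∈ Icc (0:ℝ) τ, ∀ x ∈ Icc a b,
      g t x * Real.exp (-(K+1) * t) ≤ g t₀ x₀ * Real.exp (-(K+1) * t₀) := by
    intro t ht x hx
    exact hq₀max' (t, x) ⟨ht, hx⟩
  by_cases hm : g t₀ x₀ * Real.exp (-(K+1) * t₀) ≤ 0
  · intro t ht x hx
    have h1 := hq₀max t ht x hx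
    have hE : 0 < Real.exp (-(K+1)*t) := Real.exp_pos _
    nlinarith
  push_neg at hm
  exfalso
  have hE₀ : 0 < Real.exp (-(K+1)*t₀) := Real.exp_pos _
  have hg₀ : 0 < g t₀ x₀ := by nlinarith
  have ht₀ : t₀ ∈ Ioc 0 τ := by
    refine ⟨?_, ht₀Q.2⟩
    rcases eq_or_lt_of_le ht₀Q.1 with h | h
    · exfalso; have h2 := hinit x₀ hx₀Q; rw [← h] at hg₀; linarith
    · exact h
  have hx₀ : x₀ ∈ Ioo a b := by
    rcases eq_or_lt_of_le hx₀Q.1 with h | h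
    · exfalso; have h2 := (hbdry t₀ ht₀Q).1; rw [← h] at hg₀; linarith
    rcases eq_or_lt_of_le hx₀Q.2 with h2 | h2
    · exfalso; have h3 := (hbdry t₀ ht₀Q).2; rw [h2] at hg₀; linarith
    exact ⟨h, h2⟩
  -- space second derivative
  have hsmax : IsLocalMax (g t₀) x₀ := by
    have hmem : Icc a b ∈ 𝓝 x₀ := Icc_mem_nhds hx₀.1 hx₀.2
    filter_upwards [hmem] with y hy
    have := hq₀max t₀ ht₀Q y hy
    nlinarith
  have hdd : deriv (deriv (g t₀)) x₀ ≤ 0 := secondDerivTest (hreg t₀ ht₀ x₀ hx₀) hsmax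
  obtain ⟨d, hdW, hdle⟩ := hkey t₀ ht₀ x₀ hx₀ hg₀
  -- time derivative
  have hEd : HasDerivAt (fun s : ℝ => Real.exp (-(K+1)*s)) (Real.exp (-(K+1)*t₀) * (-(K+1))) t₀ := by
    have h1 : HasDerivAt (fun s : ℝ => -(K+1)*s) (-(K+1)) t₀ := by
      simpa using (hasDerivAt_id t₀).const_mul (-(K+1))
    exact (Real.hasDerivAt_exp (-(K+1)*t₀)).comp t₀ h1
  have hψ : HasDerivWithinAt (fun s => g s x₀ * Real.exp (-(K+1)*s))
      (d * Real.exp (-(K+1)*t₀) + g t₀ x₀ * (Real.exp (-(K+1)*t₀) * (-(K+1)))) (Ioc 0 τ) t₀ :=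
    hdW.mul hEd.hasDerivWithinAt
  have hc : 0 ≤ d * Real.exp (-(K+1)*t₀) + g t₀ x₀ * (Real.exp (-(K+1)*t₀) * (-(K+1))) := by
    refine leftmax ht₀ ?_ hψ
    intro s hs
    exact hq₀max s hs x₀ hx₀Q
  have h1 : d ≤ K * g t₀ x₀ := by linarith
  have h2 : d * Real.exp (-(K+1)*t₀) ≤ K * g t₀ x₀ * Real.exp (-(K+1)*t₀) :=
    mul_le_mul_of_nonneg_right h1 hE₀.le
  nlinarith [mul_pos hg₀ hE₀]

end BASE

lemma planeLe (τ : ℝ) (hτ : 0 < τ) (V f : ℝ → ℝ) (u : ℝ → ℝ → ℝ)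
    (hV_nonneg : ∀ x ∈ Icc (-1:ℝ) 1, 0 ≤ V x)
    (hf_nonneg : ∀ s ≥ (0:ℝ), 0 ≤ f s)
    (hu_cont : ContinuousOn (fun q : ℝ × ℝ => u q.1 q.2) (Icc 0 τ ×ˢ Icc (-1) 1))
    (hu_nonneg : ∀ t ∈ Icc 0 τ, ∀ x ∈ Icc (-1:ℝ) 1, 0 ≤ u t x)
    (hu_reg : ∀ t ∈ Ioc 0 τ, ∀ x ∈ Ioo (-1:ℝ) 1,
      DifferentiableWithinAt ℝ (fun s => u s x) (Ioc 0 τ) t ∧ ContDiffAt ℝ 2 (u t) x)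
    (heq : ∀ t ∈ Ioc 0 τ, ∀ x ∈ Ioo (-1:ℝ) 1,
      derivWithin (fun s => u s x) (Ioc 0 τ) t = deriv (deriv (u t)) x + V x * f (u t x))
    (K₀ Vb M : ℝ) (hK₀ : 0 ≤ K₀) (hVb0 : 0 ≤ Vb)
    (hVb : ∀ x ∈ Icc (-1:ℝ) 1, V x ≤ Vb)
    (hM : ∀ t ∈ Icc 0 τ, ∀ x ∈ Icc (-1:ℝ) 1, u t x ≤ M)
    (hLip : ∀ p q : ℝ, 0 ≤ q → q ≤ p → p ≤ M → f p - f q ≤ K₀ * (p - q))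
    (lam b : ℝ) (hlam : 0 ≤ lam) (hlb : lam < b) (hb1 : b ≤ 1)
    (hVc : ∀ x ∈ Icc lam b, V x ≤ V (2*lam - x))
    (hIc : ∀ x ∈ Icc lam b, u 0 x ≤ u 0 (2*lam - x))
    (hBd : ∀ t ∈ Icc 0 τ, u t b ≤ u t (2*lam - b)) :
    ∀ t ∈ Icc 0 τ, ∀ x ∈ Icc lam b, u t x ≤ u t (2*lam - x) := by
  have hlam1 : lam < 1 := lt_of_lt_of_le hlb hb1
  -- membership facts
  have hmemx : ∀ x ∈ Icc lam b, x ∈ Icc (-1:ℝ) 1 := by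
    intro x hx; exact ⟨by linarith [hx.1], by linarith [hx.2]⟩
  have hmemx' : ∀ x ∈ Icc lam b, 2*lam - x ∈ Icc (-1:ℝ) 1 := by
    intro x hx; constructor
    · have := hx.2; nlinarith
    · have := hx.1; nlinarith
  have hmemo : ∀ x ∈ Ioo lam b, x ∈ Ioo (-1:ℝ) 1 := by
    intro x hx; exact ⟨by linarith [hx.1], by linarith [hx.2]⟩
  have hmemo' : ∀ x ∈ Ioo lam b, 2*lam - x ∈ Ioo (-1:ℝ) 1 := by
    intro x hx; constructor
    · have := hx.2; nlinarith
    · have h1 := hx.1; nlinarith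
  have key : ∀ t ∈ Icc 0 τ, ∀ x ∈ Icc lam b, u t x - u t (2*lam - x) ≤ 0 := by
    apply maxprin τ lam b (K₀ * Vb) hτ hlb (mul_nonneg hK₀ hVb0)
      (fun t x => u t x - u t (2*lam - x))
    -- continuity
    · have h1 : ContinuousOn (fun q : ℝ × ℝ => u q.1 q.2) (Icc 0 τ ×ˢ Icc lam b) :=
        hu_cont.mono (prod_mono_right (fun x hx => hmemx x hx))
      have hmap : Continuous (fun q : ℝ × ℝ => ((q.1, 2*lam - q.2) : ℝ × ℝ)) :=
        continuous_fst.prodMk (continuous_const.sub continuous_snd)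
      have h2 : ContinuousOn (fun q : ℝ × ℝ => u q.1 (2*lam - q.2)) (Icc 0 τ ×ˢ Icc lam b) := by
        apply hu_cont.comp hmap.continuousOn
        intro q hq
        rw [mem_prod] at hq ⊢
        exact ⟨hq.1, hmemx' q.2 hq.2⟩
      exact h1.sub h2
    -- regularity in space
    · intro t ht x hx
      have h1 := (hu_reg t ht x (hmemo x hx)).2
      have h2 := (hu_reg t ht (2*lam - x) (hmemo' x hx)).2
      have h3 : ContDiffAt ℝ 2 (fun y : ℝ => u t (2*lam - y)) x := by
        have := h2.comp x ((contDiff_const.sub contDiff_id).contDiffAt (n := 2))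
        exact this
      exact h1.sub h3
    -- key differential inequality
    · intro t ht x hx hgpos
      have hx1 := hmemo x hx
      have hx2 := hmemo' x hx
      have hA := (hu_reg t ht x hx1).1
      have hB := (hu_reg t ht (2*lam - x) hx2).1
      refine ⟨derivWithin (fun s => u s x) (Ioc 0 τ) t
        - derivWithin (fun s => u s (2*lam - x)) (Ioc 0 τ) t,
        hA.hasDerivWithinAt.sub hB.hasDerivWithinAt, ?_⟩
      have hC1 := (hu_reg t ht x hx1).2
      have hC2 := (hu_reg t ht (2*lam - x) hx2).2
      have hdd : deriv (deriv (fun y => u t y - u t (2*lam - y))) x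
          = deriv (deriv (u t)) x - deriv (deriv (u t)) (2*lam - x) := by
        apply dd_sub (2*lam)
        · exact evDiffAt hC1
        · have hev := evDiffAt hC2
          have hten : Tendsto (fun y : ℝ => 2*lam - y) (𝓝 x) (𝓝 (2*lam - x)) := by
            exact (tendsto_const_nhds.sub tendsto_id)
          exact hten.eventually hev
        · exact derivDiffAt hC1
        · exact derivDiffAt hC2
      rw [heq t ht x hx1, heq t ht (2*lam - x) hx2]
      have hddg : deriv (deriv ((fun t x => u t x - u t (2*lam - x)) t)) x
          = deriv (deriv (u t)) x - deriv (deriv (u t)) (2*lam - x) := hdd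
      rw [hddg]
      -- the inequality
      set u₁ := u t x with hu₁
      set u₂ := u t (2*lam - x) with hu₂
      have htI : t ∈ Icc 0 τ := ⟨ht.1.le, ht.2⟩
      have hxI : x ∈ Icc (-1:ℝ) 1 := ⟨hx1.1.le, hx1.2.le⟩
      have hxI' : 2*lam - x ∈ Icc (-1:ℝ) 1 := ⟨hx2.1.le, hx2.2.le⟩
      have h0u₂ : 0 ≤ u₂ := hu_nonneg t htI _ hxI'
      have hu₁M : u₁ ≤ M := hM t htI x hxI
      have h21 : u₂ < u₁ := by
        simp only [hu₁, hu₂] at hgpos ⊢; linarith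
      have hLf : f u₁ - f u₂ ≤ K₀ * (u₁ - u₂) := hLip u₁ u₂ h0u₂ h21.le hu₁M
      have hf2 : 0 ≤ f u₂ := hf_nonneg u₂ h0u₂
      have hVx : 0 ≤ V x := hV_nonneg x hxI
      have hVxb : V x ≤ Vb := hVb x hxI
      have hVcc : V x ≤ V (2*lam - x) := hVc x ⟨hx.1.le, hx.2.le⟩
      have e1 : V x * (f u₁ - f u₂) ≤ V x * (K₀ * (u₁ - u₂)) :=
        mul_le_mul_of_nonneg_left hLf hVx
      have e2 : (V x - V (2*lam - x)) * f u₂ ≤ 0 :=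
        mul_nonpos_of_nonpos_of_nonneg (by linarith) hf2
      have e3 : V x * (K₀ * (u₁ - u₂)) ≤ Vb * (K₀ * (u₁ - u₂)) :=
        mul_le_mul_of_nonneg_right hVxb (mul_nonneg hK₀ (by linarith))
      nlinarith
    -- boundary
    · intro t ht
      constructor
      · rw [show 2*lam - lam = lam by ring]; simp
      · linarith [hBd t ht]
    -- initial
    · intro x hx
      linarith [hIc x hx]
  intro t ht x hx
  linarith [key t ht x hx]

theorem stmt19
    (f : ℝ → ℝ)
    (hf_C1 : ContDiffOn ℝ 1 f (Ici 0)) (hf_nonneg : ∀ s ≥ (0:ℝ), 0 ≤ f s)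
    (V u₀ : ℝ → ℝ)
    (hV_C1 : ContDiffOn ℝ 1 V (Icc (-1) 1)) (hu₀_C1 : ContDiffOn ℝ 1 u₀ (Icc (-1) 1))
    (hV_nonneg : ∀ x ∈ Icc (-1:ℝ) 1, 0 ≤ V x) (hu₀_nonneg : ∀ x ∈ Icc (-1:ℝ) 1, 0 ≤ u₀ x)
    (hV_even : ∀ x ∈ Icc (-1:ℝ) 1, V (-x) = V x) (hu₀_even : ∀ x ∈ Icc (-1:ℝ) 1, u₀ (-x) = u₀ x)
    (hV0 : 0 < V 0) (hu₀0 : 0 < u₀ 0) (hu₀1 : u₀ 1 = 0)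
    (L : ℝ) (hL : L ∈ Ico (1/3 : ℝ) 1)
    (hV' : ∀ x ∈ Icc (0:ℝ) L, derivWithin V (Icc (-1) 1) x ≤ 0)
    (hu₀' : ∀ x ∈ Icc (0:ℝ) L, derivWithin u₀ (Icc (-1) 1) x ≤ 0)
    (hVbd : ∀ x ∈ Icc L (1:ℝ), V x ≤ V L)
    (hu₀bd : ∀ x ∈ Icc L (1:ℝ), u₀ x ≤ u₀ L)
    (τ : ℝ) (hτ : 0 < τ)
    (u : ℝ → ℝ → ℝ)
    (hu_cont : ContinuousOn (fun q : ℝ × ℝ => u q.1 q.2) (Icc 0 τ ×ˢ Icc (-1) 1))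
    (hu_nonneg : ∀ t ∈ Icc 0 τ, ∀ x ∈ Icc (-1:ℝ) 1, 0 ≤ u t x)
    (hu_reg : ∀ t ∈ Ioc 0 τ, ∀ x ∈ Ioo (-1:ℝ) 1,
      DifferentiableWithinAt ℝ (fun s => u s x) (Ioc 0 τ) t ∧ ContDiffAt ℝ 2 (u t) x)
    (heq : ∀ t ∈ Ioc 0 τ, ∀ x ∈ Ioo (-1:ℝ) 1,
      derivWithin (fun s => u s x) (Ioc 0 τ) t = deriv (deriv (u t)) x + V x * f (u t x))
    (hbc : ∀ t ∈ Ioc 0 τ, u t (-1) = 0 ∧ u t 1 = 0)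
    (hic : ∀ x ∈ Icc (-1:ℝ) 1, u 0 x = u₀ x) :
    (∀ t ∈ Ioc 0 τ, ∀ x ∈ Icc (0:ℝ) L, deriv (u t) x ≤ 0) ∧
    (∀ t ∈ Ioo 0 τ, ∀ x ∈ Icc (-1:ℝ) 1, u t x ≤ u t 0) := by
  rw [mem_Ico] at hL
  have hL13 : (1/3 : ℝ) ≤ L := hL.1
  have hL1 : L < 1 := hL.2
  have hL0 : (0:ℝ) < L := by linarith
  -- antitonicity of V and u₀ on [0, L]
  have hVanti : AntitoneOn V (Icc 0 L) := by
    apply antitoneOn_of_deriv_nonpos (convex_Icc 0 L)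
    · exact hV_C1.continuousOn.mono (Icc_subset_Icc (by linarith) (by linarith))
    · intro x hx
      rw [interior_Icc] at hx
      have hmem : Icc (-1:ℝ) 1 ∈ 𝓝 x := Icc_mem_nhds (by linarith [hx.1]) (by linarith [hx.2])
      exact ((hV_C1.differentiableOn (by norm_num) x
        ⟨by linarith [hx.1], by linarith [hx.2]⟩).differentiableAt hmem).differentiableWithinAt
    · intro x hx
      rw [interior_Icc] at hx
      have hmem : Icc (-1:ℝ) 1 ∈ 𝓝 x := Icc_mem_nhds (by linarith [hx.1]) (by linarith [hx.2])
      rw [← derivWithin_of_mem_nhds hmem]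
      exact hV' x ⟨hx.1.le, hx.2.le⟩
  have hu₀anti : AntitoneOn u₀ (Icc 0 L) := by
    apply antitoneOn_of_deriv_nonpos (convex_Icc 0 L)
    · exact hu₀_C1.continuousOn.mono (Icc_subset_Icc (by linarith) (by linarith))
    · intro x hx
      rw [interior_Icc] at hx
      have hmem : Icc (-1:ℝ) 1 ∈ 𝓝 x := Icc_mem_nhds (by linarith [hx.1]) (by linarith [hx.2])
      exact ((hu₀_C1.differentiableOn (by norm_num) x
        ⟨by linarith [hx.1], by linarith [hx.2]⟩).differentiableAt hmem).differentiableWithinAt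
    · intro x hx
      rw [interior_Icc] at hx
      have hmem : Icc (-1:ℝ) 1 ∈ 𝓝 x := Icc_mem_nhds (by linarith [hx.1]) (by linarith [hx.2])
      rw [← derivWithin_of_mem_nhds hmem]
      exact hu₀' x ⟨hx.1.le, hx.2.le⟩
  -- comparison helpers
  have hVkey : ∀ x z : ℝ, 0 ≤ z → z ≤ L → z ≤ x → x ≤ 1 → V x ≤ V z := by
    intro x z hz0 hzL hzx hx1
    rcases le_total x L with h|h
    · exact hVanti ⟨hz0, hzL⟩ ⟨le_trans hz0 hzx, h⟩ hzx
    · exact le_trans (hVbd x ⟨h, hx1⟩) (hVanti ⟨hz0, hzL⟩ ⟨by linarith, le_rfl⟩ hzL)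
  have hu₀key : ∀ x z : ℝ, 0 ≤ z → z ≤ L → z ≤ x → x ≤ 1 → u₀ x ≤ u₀ z := by
    intro x z hz0 hzL hzx hx1
    rcases le_total x L with h|h
    · exact hu₀anti ⟨hz0, hzL⟩ ⟨le_trans hz0 hzx, h⟩ hzx
    · exact le_trans (hu₀bd x ⟨h, hx1⟩) (hu₀anti ⟨hz0, hzL⟩ ⟨by linarith, le_rfl⟩ hzL)
  have hVcomp : ∀ x y : ℝ, 0 ≤ x → x ≤ 1 → -L ≤ y → y ≤ L → -x ≤ y → y ≤ x → V x ≤ V y := by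
    intro x y hx0 hx1 h1 h2 h3 h4
    rcases le_total 0 y with h|h
    · exact hVkey x y h h2 h4 hx1
    · have hmem : -y ∈ Icc (-1:ℝ) 1 := ⟨by linarith, by linarith⟩
      have he := hV_even (-y) hmem
      rw [neg_neg] at he
      rw [he]
      exact hVkey x (-y) (by linarith) (by linarith) (by linarith) hx1
  have hu₀comp : ∀ x y : ℝ, 0 ≤ x → x ≤ 1 → -L ≤ y → y ≤ L → -x ≤ y → y ≤ x → u₀ x ≤ u₀ y := by
    intro x y hx0 hx1 h1 h2 h3 h4
    rcases le_total 0 y with h|h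
    · exact hu₀key x y h h2 h4 hx1
    · have hmem : -y ∈ Icc (-1:ℝ) 1 := ⟨by linarith, by linarith⟩
      have he := hu₀_even (-y) hmem
      rw [neg_neg] at he
      rw [he]
      exact hu₀key x (-y) (by linarith) (by linarith) (by linarith) hx1
  -- global bounds
  obtain ⟨M, hMb⟩ := (isCompact_Icc.prod isCompact_Icc).exists_bound_of_continuousOn hu_cont
  have hM : ∀ t ∈ Icc 0 τ, ∀ x ∈ Icc (-1:ℝ) 1, u t x ≤ M := by
    intro t ht x hx
    have := hMb (t, x) ⟨ht, hx⟩
    simp only [Real.norm_eq_abs] at this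
    exact (abs_le.mp this).2
  obtain ⟨Vb, hVbb⟩ := isCompact_Icc.exists_bound_of_continuousOn hV_C1.continuousOn
  have hVb0 : 0 ≤ Vb := le_trans (norm_nonneg _) (hVbb 0 (by norm_num))
  have hVble : ∀ x ∈ Icc (-1:ℝ) 1, V x ≤ Vb := by
    intro x hx
    have := hVbb x hx
    simp only [Real.norm_eq_abs] at this
    exact (abs_le.mp this).2
  have hMnn : 0 ≤ M :=
    le_trans (hu_nonneg 0 ⟨le_rfl, hτ.le⟩ 0 (by norm_num)) (hM 0 ⟨le_rfl, hτ.le⟩ 0 (by norm_num))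
  have hfd : ContinuousOn (derivWithin f (Ici 0)) (Icc 0 M) :=
    (hf_C1.continuousOn_derivWithin (uniqueDiffOn_Ici 0) le_rfl).mono Icc_subset_Ici_self
  obtain ⟨K₀, hK₀b⟩ := isCompact_Icc.exists_bound_of_continuousOn hfd
  have hK₀0 : 0 ≤ K₀ := le_trans (norm_nonneg _) (hK₀b 0 ⟨le_rfl, hMnn⟩)
  have hLip : ∀ p q : ℝ, 0 ≤ q → q ≤ p → p ≤ M → f p - f q ≤ K₀ * (p - q) := by
    intro p q h0 hqp hpM
    rcases eq_or_lt_of_le hqp with h|h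
    · rw [← h]; simp
    · have hcont : ContinuousOn f (Icc q p) :=
        hf_C1.continuousOn.mono (fun y hy => le_trans h0 hy.1)
      have hdif : ∀ y ∈ Ioo q p, HasDerivAt f (deriv f y) y := by
        intro y hy
        have hy0 : (0:ℝ) < y := lt_of_le_of_lt h0 hy.1
        exact (((hf_C1.differentiableOn (by norm_num)) y hy0.le).differentiableAt
          (Ici_mem_nhds hy0)).hasDerivAt
      obtain ⟨c, hc, hcs⟩ := exists_hasDerivAt_eq_slope f (deriv f) h hcont hdif
      have hc0 : (0:ℝ) < c := lt_of_le_of_lt h0 hc.1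
      have hcw : deriv f c = derivWithin f (Ici 0) c :=
        (derivWithin_of_mem_nhds (Ici_mem_nhds hc0)).symm
      have hb2 : |derivWithin f (Ici 0) c| ≤ K₀ := by
        have := hK₀b c ⟨hc0.le, by linarith [hc.2]⟩
        simpa [Real.norm_eq_abs] using this
      have hpq : p - q ≠ 0 := by intro hcon; rw [sub_eq_zero] at hcon; exact ne_of_gt h hcon
      have heqq : f p - f q = deriv f c * (p - q) := by
        rw [hcs, div_mul_cancel₀ _ hpq]
      rw [heqq, hcw]
      exact mul_le_mul_of_nonneg_right (abs_le.mp hb2).2 (by linarith)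
  -- evenness of u in space
  have even1 : ∀ t ∈ Icc 0 τ, ∀ x ∈ Icc (0:ℝ) 1, u t x ≤ u t (-x) := by
    have hVc0 : ∀ x ∈ Icc (0:ℝ) 1, V x ≤ V (2*0 - x) := by
      intro x hx
      rw [show 2*(0:ℝ) - x = -x by ring, hV_even x ⟨by linarith [hx.1], hx.2⟩]
    have hIc0 : ∀ x ∈ Icc (0:ℝ) 1, u 0 x ≤ u 0 (2*0 - x) := by
      intro x hx
      have hxI : x ∈ Icc (-1:ℝ) 1 := ⟨by linarith [hx.1], hx.2⟩
      have hxI' : -x ∈ Icc (-1:ℝ) 1 := ⟨by linarith [hx.2], by linarith [hx.1]⟩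
      rw [show 2*(0:ℝ) - x = -x by ring, hic x hxI, hic (-x) hxI', hu₀_even x hxI]
    have hBd0 : ∀ t ∈ Icc 0 τ, u t 1 ≤ u t (2*0 - 1) := by
      intro t ht
      rw [show 2*(0:ℝ) - 1 = -1 by ring]
      rcases eq_or_lt_of_le ht.1 with h|h
      · rw [← h, hic 1 (by norm_num), hic (-1) (by norm_num), hu₀1, hu₀_even 1 (by norm_num), hu₀1]
      · rw [(hbc t ⟨h, ht.2⟩).2, (hbc t ⟨h, ht.2⟩).1]
    intro t ht x hx
    have := planeLe τ hτ V f u hV_nonneg hf_nonneg hu_cont hu_nonneg hu_reg heq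
      K₀ Vb M hK₀0 hVb0 hVble hM hLip 0 1 le_rfl one_pos le_rfl hVc0 hIc0 hBd0 t ht x hx
    rw [show 2*(0:ℝ) - x = -x by ring] at this
    exact this
  have even2 : ∀ t ∈ Icc 0 τ, ∀ x ∈ Icc (0:ℝ) 1, u t (-x) ≤ u t x := by
    have hw_cont : ContinuousOn (fun q : ℝ × ℝ => u q.1 (-q.2)) (Icc 0 τ ×ˢ Icc (-1) 1) := by
      apply hu_cont.comp ((continuous_fst.prodMk continuous_snd.neg).continuousOn)
      intro q hq
      rw [mem_prod] at hq ⊢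
      refine ⟨hq.1, ?_⟩
      simp only [mem_Icc, Pi.neg_apply] at hq ⊢
      constructor <;> linarith [hq.2.1, hq.2.2]
    have hw_nonneg : ∀ t ∈ Icc 0 τ, ∀ x ∈ Icc (-1:ℝ) 1, 0 ≤ u t (-x) := by
      intro t ht x hx
      exact hu_nonneg t ht (-x) ⟨by linarith [hx.2], by linarith [hx.1]⟩
    have hw_reg : ∀ t ∈ Ioc 0 τ, ∀ x ∈ Ioo (-1:ℝ) 1,
        DifferentiableWithinAt ℝ (fun s => u s (-x)) (Ioc 0 τ) t ∧
          ContDiffAt ℝ 2 (fun y => u t (-y)) x := by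
      intro t ht x hx
      have hx' : -x ∈ Ioo (-1:ℝ) 1 := ⟨by linarith [hx.2], by linarith [hx.1]⟩
      refine ⟨(hu_reg t ht (-x) hx').1, ?_⟩
      have := (hu_reg t ht (-x) hx').2.comp x (contDiff_id.neg.contDiffAt (n := 2))
      exact this
    have hw_eq : ∀ t ∈ Ioc 0 τ, ∀ x ∈ Ioo (-1:ℝ) 1,
        derivWithin (fun s => u s (-x)) (Ioc 0 τ) t
          = deriv (deriv (fun y => u t (-y))) x + V x * f (u t (-x)) := by
      intro t ht x hx
      have hx' : -x ∈ Ioo (-1:ℝ) 1 := ⟨by linarith [hx.2], by linarith [hx.1]⟩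
      have h1 := heq t ht (-x) hx'
      rw [hV_even x ⟨hx.1.le, hx.2.le⟩] at h1
      have h2 : deriv (deriv (fun y : ℝ => u t (-y))) x = deriv (deriv (u t)) (-x) := by
        have h3 : (fun y : ℝ => u t (-y)) = (fun y : ℝ => u t (0 - y)) := by
          funext y; rw [zero_sub]
        rw [h3, dd_reflect, zero_sub]
      rw [h2]
      exact h1
    have hw_M : ∀ t ∈ Icc 0 τ, ∀ x ∈ Icc (-1:ℝ) 1, u t (-x) ≤ M := by
      intro t ht x hx
      exact hM t ht (-x) ⟨by linarith [hx.2], by linarith [hx.1]⟩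
    have hVc0 : ∀ x ∈ Icc (0:ℝ) 1, V x ≤ V (2*0 - x) := by
      intro x hx
      rw [show 2*(0:ℝ) - x = -x by ring, hV_even x ⟨by linarith [hx.1], hx.2⟩]
    have hIcw : ∀ x ∈ Icc (0:ℝ) 1, u 0 (-x) ≤ u 0 (-(2*0 - x)) := by
      intro x hx
      rw [show -(2*(0:ℝ) - x) = x by ring]
      have hxI : x ∈ Icc (-1:ℝ) 1 := ⟨by linarith [hx.1], hx.2⟩
      have hxI' : -x ∈ Icc (-1:ℝ) 1 := ⟨by linarith [hx.2], by linarith [hx.1]⟩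
      rw [hic x hxI, hic (-x) hxI', hu₀_even x hxI]
    have hBdw : ∀ t ∈ Icc 0 τ, u t (-1) ≤ u t (-(2*0 - 1)) := by
      intro t ht
      rw [show -(2*(0:ℝ) - 1) = 1 by ring]
      rcases eq_or_lt_of_le ht.1 with h|h
      · rw [← h, hic 1 (by norm_num), hic (-1) (by norm_num), hu₀1, hu₀_even 1 (by norm_num), hu₀1]
      · rw [(hbc t ⟨h, ht.2⟩).2, (hbc t ⟨h, ht.2⟩).1]
    intro t ht x hx
    have := planeLe τ hτ V f (fun t y => u t (-y)) hV_nonneg hf_nonneg hw_cont hw_nonneg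
      hw_reg hw_eq K₀ Vb M hK₀0 hVb0 hVble hw_M hLip 0 1 le_rfl one_pos le_rfl
      hVc0 hIcw hBdw t ht x hx
    rw [show 2*(0:ℝ) - x = -x by ring, neg_neg] at this
    exact this
  have heven : ∀ t ∈ Icc 0 τ, ∀ x ∈ Icc (-1:ℝ) 1, u t (-x) = u t x := by
    intro t ht x hx
    rcases le_total 0 x with h|h
    · exact le_antisymm (even2 t ht x ⟨h, hx.2⟩) (even1 t ht x ⟨h, hx.2⟩)
    · have h1 := le_antisymm (even2 t ht (-x) ⟨by linarith, by linarith [hx.1]⟩)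
        (even1 t ht (-x) ⟨by linarith, by linarith [hx.1]⟩)
      rw [neg_neg] at h1
      exact h1.symm
  -- the plane at L on [L, 1]
  have hQL : ∀ t ∈ Icc 0 τ, ∀ x ∈ Icc L 1, u t x ≤ u t (2*L - x) := by
    have hVcL : ∀ x ∈ Icc L 1, V x ≤ V (2*L - x) := by
      intro x hx
      apply hVcomp x (2*L - x) (by linarith [hx.1]) hx.2
      · linarith [hx.2]
      · linarith [hx.1]
      · linarith [hx.1]
      · linarith [hx.1]
    have hIcL : ∀ x ∈ Icc L 1, u 0 x ≤ u 0 (2*L - x) := by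
      intro x hx
      have hxI : x ∈ Icc (-1:ℝ) 1 := ⟨by linarith [hx.1], hx.2⟩
      have hyI : 2*L - x ∈ Icc (-1:ℝ) 1 := ⟨by linarith [hx.2], by linarith [hx.1]⟩
      rw [hic x hxI, hic _ hyI]
      apply hu₀comp x (2*L - x) (by linarith [hx.1]) hx.2
      · linarith [hx.2]
      · linarith [hx.1]
      · linarith [hx.1]
      · linarith [hx.1]
    have hBdL : ∀ t ∈ Icc 0 τ, u t 1 ≤ u t (2*L - 1) := by
      intro t ht
      have hmem : 2*L - 1 ∈ Icc (-1:ℝ) 1 := ⟨by linarith, by linarith⟩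
      rcases eq_or_lt_of_le ht.1 with h|h
      · rw [← h, hic 1 (by norm_num), hic _ hmem, hu₀1]
        exact hu₀_nonneg _ hmem
      · rw [(hbc t ⟨h, ht.2⟩).2]
        exact hu_nonneg t ht _ hmem
    exact planeLe τ hτ V f u hV_nonneg hf_nonneg hu_cont hu_nonneg hu_reg heq
      K₀ Vb M hK₀0 hVb0 hVble hM hLip L 1 hL0.le hL1 le_rfl hVcL hIcL hBdL
  -- the planes at lam ∈ [0, L] on [lam, min 1 (L + lam)]
  have hQlam : ∀ lam : ℝ, 0 ≤ lam → lam ≤ L → ∀ t ∈ Icc 0 τ,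
      ∀ x ∈ Icc lam (min 1 (L + lam)), u t x ≤ u t (2*lam - x) := by
    intro lam h0 hlamL
    have hVcl : ∀ x ∈ Icc lam (min 1 (L + lam)), V x ≤ V (2*lam - x) := by
      intro x hx
      have hxb : x ≤ L + lam := le_trans hx.2 (min_le_right _ _)
      have hx1 : x ≤ 1 := le_trans hx.2 (min_le_left _ _)
      apply hVcomp x (2*lam - x) (by linarith [hx.1]) hx1
      · linarith
      · linarith [hx.1]
      · linarith
      · linarith [hx.1]
    have hIcl : ∀ x ∈ Icc lam (min 1 (L + lam)), u 0 x ≤ u 0 (2*lam - x) := by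
      intro x hx
      have hxb : x ≤ L + lam := le_trans hx.2 (min_le_right _ _)
      have hx1 : x ≤ 1 := le_trans hx.2 (min_le_left _ _)
      have hxI : x ∈ Icc (-1:ℝ) 1 := ⟨by linarith [hx.1], hx1⟩
      have hyI : 2*lam - x ∈ Icc (-1:ℝ) 1 := ⟨by linarith [hx.1], by linarith [hx.1]⟩
      rw [hic x hxI, hic _ hyI]
      apply hu₀comp x (2*lam - x) (by linarith [hx.1]) hx1
      · linarith
      · linarith [hx.1]
      · linarith
      · linarith [hx.1]
    have hBdl : ∀ t ∈ Icc 0 τ, u t (min 1 (L + lam)) ≤ u t (2*lam - min 1 (L + lam)) := by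
      intro t ht
      rcases le_total 1 (L + lam) with h|h
      · rw [min_eq_left h]
        have hmem : 2*lam - 1 ∈ Icc (-1:ℝ) 1 := ⟨by linarith, by linarith⟩
        rcases eq_or_lt_of_le ht.1 with h2|h2
        · rw [← h2, hic 1 (by norm_num), hic _ hmem, hu₀1]
          exact hu₀_nonneg _ hmem
        · rw [(hbc t ⟨h2, ht.2⟩).2]
          exact hu_nonneg t ht _ hmem
      · rw [min_eq_right h]
        have h1 := hQL t ht (L + lam) ⟨by linarith, h⟩
        rw [show 2*L - (L + lam) = L - lam by ring] at h1
        have h2 := heven t ht (L - lam) ⟨by linarith, by linarith⟩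
        rw [show 2*lam - (L + lam) = -(L - lam) by ring, h2]
        exact h1
    exact planeLe τ hτ V f u hV_nonneg hf_nonneg hu_cont hu_nonneg hu_reg heq
      K₀ Vb M hK₀0 hVb0 hVble hM hLip lam (min 1 (L + lam)) h0
      (lt_min (by linarith) (by linarith)) (min_le_left _ _) hVcl hIcl hBdl
  -- part (a)
  have parta : ∀ t ∈ Ioc 0 τ, ∀ x ∈ Icc (0:ℝ) L, deriv (u t) x ≤ 0 := by
    intro t ht x hx
    have hxI : x ∈ Ioo (-1:ℝ) 1 := ⟨by linarith [hx.1], by linarith [hx.2]⟩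
    have hC2 := (hu_reg t ht x hxI).2
    have hda : HasDerivAt (u t) (deriv (u t) x) x :=
      (hC2.differentiableAt (by norm_num)).hasDerivAt
    rw [hasDerivAt_iff_tendsto_slope] at hda
    have hmap1 : Tendsto (fun h : ℝ => x + h) (𝓝[>] 0) (𝓝[≠] x) := by
      apply tendsto_nhdsWithin_of_tendsto_nhds_of_eventually_within
      · have h2 : Tendsto (fun h : ℝ => x + h) (𝓝 (0:ℝ)) (𝓝 x) := by
          have h3 := Continuous.tendsto (show Continuous (fun h : ℝ => x + h) from continuous_const.add continuous_id) (0:ℝ)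
          simpa using h3
        exact h2.mono_left nhdsWithin_le_nhds
      · filter_upwards [self_mem_nhdsWithin] with h hh
        simp only [mem_compl_iff, mem_singleton_iff]
        have h0 : (0:ℝ) < h := hh
        exact ne_of_gt (by linarith : x < x + h)
    have hmap2 : Tendsto (fun h : ℝ => x - h) (𝓝[>] 0) (𝓝[≠] x) := by
      apply tendsto_nhdsWithin_of_tendsto_nhds_of_eventually_within
      · have h2 : Tendsto (fun h : ℝ => x - h) (𝓝 (0:ℝ)) (𝓝 x) := by
          have h3 := Continuous.tendsto (show Continuous (fun h : ℝ => x - h) from continuous_const.sub continuous_id) (0:ℝ)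
          simpa using h3
        exact h2.mono_left nhdsWithin_le_nhds
      · filter_upwards [self_mem_nhdsWithin] with h hh
        simp only [mem_compl_iff, mem_singleton_iff]
        have h0 : (0:ℝ) < h := hh
        exact ne_of_lt (by linarith : x - h < x)
    have T1 := hda.comp hmap1
    have T2 := hda.comp hmap2
    have TS := T1.add T2
    have hδ : 0 < min (1 - x) L := lt_min (by linarith [hx.2]) hL0
    have hle : deriv (u t) x + deriv (u t) x ≤ 0 := by
      refine le_of_tendsto TS ?_
      filter_upwards [Ioo_mem_nhdsGT_of_mem (⟨le_rfl, hδ⟩ : (0:ℝ) ∈ Ico 0 (min (1-x) L))]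
        with h hh
      have h0 : 0 < h := hh.1
      have hha : h < 1 - x := lt_of_lt_of_le hh.2 (min_le_left _ _)
      have hhb : h < L := lt_of_lt_of_le hh.2 (min_le_right _ _)
      have hkey2 : u t (x + h) ≤ u t (x - h) := by
        have hmm := hQlam x hx.1 hx.2 t ⟨ht.1.le, ht.2⟩ (x + h)
          ⟨by linarith, le_min (by linarith) (by linarith)⟩
        rw [show 2*x - (x + h) = x - h by ring] at hmm
        exact hmm
      simp only [Function.comp_apply]
      rw [slope_def_field, slope_def_field]
      have hne : h ≠ 0 := ne_of_gt h0
      have hrw : (u t (x+h) - u t x)/(x + h - x) + (u t (x-h) - u t x)/(x - h - x)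
          = (u t (x+h) - u t (x-h))/h := by
        rw [show x + h - x = h by ring, show x - h - x = -h by ring]
        field_simp [hne]
        ring
      rw [hrw]
      apply div_nonpos_of_nonpos_of_nonneg (by linarith) h0.le
    linarith
  -- part (b)
  have keyz : ∀ t ∈ Icc 0 τ, ∀ z : ℝ, 0 ≤ z → z ≤ L → u t z ≤ u t 0 := by
    intro t ht z h0 hzL
    have hmm := hQlam (z/2) (by linarith) (by linarith) t ht z
      ⟨by linarith, le_min (by linarith) (by linarith)⟩
    rw [show 2*(z/2) - z = 0 by ring] at hmm
    exact hmm
  have partb1 : ∀ t ∈ Icc 0 τ, ∀ x ∈ Icc (0:ℝ) 1, u t x ≤ u t 0 := by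
    intro t ht x hx
    rcases le_total x L with h|h
    · exact keyz t ht x hx.1 h
    · have h1 := hQL t ht x ⟨h, hx.2⟩
      rcases le_total 0 (2*L - x) with h2|h2
      · exact h1.trans (keyz t ht _ h2 (by linarith))
      · have h4 := heven t ht (x - 2*L) ⟨by linarith, by linarith [hx.2]⟩
        rw [show -(x - 2*L) = 2*L - x by ring] at h4
        have h5 := keyz t ht (x - 2*L) (by linarith) (by linarith [hx.2])
        linarith
  have partb : ∀ t ∈ Ioo 0 τ, ∀ x ∈ Icc (-1:ℝ) 1, u t x ≤ u t 0 := by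
    intro t ht x hx
    have ht' : t ∈ Icc 0 τ := ⟨ht.1.le, ht.2.le⟩
    rcases le_total 0 x with h|h
    · exact partb1 t ht' x ⟨h, hx.2⟩
    · have h1 := partb1 t ht' (-x) ⟨by linarith, by linarith [hx.1]⟩
      have h2 := heven t ht' x hx
      linarith
  exact ⟨parta, partb⟩
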